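/- Let $a_{per}, c_{per}$ be as above, $a_{per}^* = (\int_{-1/2}^{1/2} a_{per}^{-1})^{-1}$, $c = \int_{-1/2}^{1/2} \frac{c_{per}}{a_{per}(a_{per}+c_{per})}$. For odd $N$ define the two-defect flux $G_N = N\left(N(a_{per}^*)^{-1} - 2c\right)^{-1}$, the one-defect flux $F_N = N\left(N(a_{per}^*)^{-1} - c\right)^{-1}$, and $a_2^{*,N} = \frac{N-1}{2}\left( N G_N - 2 N F_N + N a_{per}^* \right)$ (with $N-1$ the number of possible positions for the second defect). Then $a_2^{*,N} \to (a_{per}^*)^3 c^2$ as $N \to \infty$. -/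

import Mathlib

open MeasureTheory Filter Topology

/-- Convergence of the one-dimensional second-order correction `a_2^{*,N}`
(computed from the two-defect and one-defect supercell fluxes) as the odd
size `N = 2k+1 → ∞`. -/
theorem stmt_2 (aper cper : ℝ → ℝ) (α β : ℝ) (hα : 0 < α)
    (hmeas : Measurable aper) (hmeasc : Measurable cper)
    (hper : ∀ x : ℝ, aper (x + 1) = aper x)
    (hperc : ∀ x : ℝ, cper (x + 1) = cper x)
    (hbound : ∀ᵐ x : ℝ, α ≤ aper x ∧ aper x ≤ β)
    (hbound' : ∀ᵐ x : ℝ, α ≤ aper x + cper x ∧ aper x + cper x ≤ β)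
    (astar c : ℝ)
    (hastar : astar = (∫ x in (-(1/2) : ℝ)..(1/2), (aper x)⁻¹)⁻¹)
    (hc : c = ∫ x in (-(1/2) : ℝ)..(1/2), cper x / (aper x * (aper x + cper x))) :
    Tendsto
      (fun k : ℕ =>
        let N : ℝ := 2 * k + 1
        let F : ℝ := N * (N * astar⁻¹ - c)⁻¹
        let G : ℝ := N * (N * astar⁻¹ - 2 * c)⁻¹
        (N - 1) / 2 * (N * G - 2 * (N * F) + N * astar))
      atTop (𝓝 (astar ^ 3 * c ^ 2)) := by
  -- β is positive
  obtain ⟨x₀, hx₀⟩ := hbound.exists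
  have hβ : 0 < β := lt_of_lt_of_le hα (hx₀.1.trans hx₀.2)
  -- integrability of aper⁻¹
  have hint : IntervalIntegrable (fun x => (aper x)⁻¹) volume (-(1/2)) (1/2) := by
    constructor <;>
    · refine MeasureTheory.Integrable.mono'
        (integrableOn_const measure_Ioc_lt_top.ne :
          IntegrableOn (fun _ : ℝ => α⁻¹) _ volume)
        hmeas.inv.aestronglyMeasurable ?_
      filter_upwards [MeasureTheory.ae_restrict_of_ae hbound] with x hx
      rw [Real.norm_eq_abs, abs_of_nonneg (inv_nonneg.2 (hα.le.trans hx.1))]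
      exact inv_anti₀ hα hx.1
  -- lower bound for the integral
  have hae : ∀ᵐ x : ℝ, (fun _ : ℝ => β⁻¹) x ≤ (aper x)⁻¹ := by
    filter_upwards [hbound] with x hx
    exact inv_anti₀ (hα.trans_le hx.1) hx.2
  have hIpos : 0 < ∫ x in (-(1/2) : ℝ)..(1/2), (aper x)⁻¹ := by
    have h := intervalIntegral.integral_mono_ae (by norm_num : (-(1/2) : ℝ) ≤ 1/2)
      intervalIntegrable_const hint hae
    rw [intervalIntegral.integral_const] at h
    refine lt_of_lt_of_le ?_ h
    rw [smul_eq_mul]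
    have : (0:ℝ) < β⁻¹ := inv_pos.2 hβ
    nlinarith
  have hastarpos : 0 < astar := by rw [hastar]; exact inv_pos.2 hIpos
  obtain ⟨A, hA⟩ : ∃ A : ℝ, A = astar⁻¹ := ⟨_, rfl⟩
  have hApos : 0 < A := hA ▸ inv_pos.2 hastarpos
  have hAne : A ≠ 0 := hApos.ne'
  -- the limiting function of t = 1/N
  set Φ : ℝ → ℝ := fun t => (1 - t) * c ^ 2 / (A * (A - 2 * c * t) * (A - c * t)) with hΦ
  have hΦ0 : Φ 0 = astar ^ 3 * c ^ 2 := by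
    have hane : astar ≠ 0 := hastarpos.ne'
    simp only [hΦ, hA]
    field_simp
    ring
  have hΦcont : ContinuousAt Φ 0 := by
    apply ContinuousAt.div
    · fun_prop
    · fun_prop
    · simp [hAne]
  have hΦtend : Tendsto Φ (𝓝 0) (𝓝 (astar ^ 3 * c ^ 2)) := by
    rw [← hΦ0]; exact hΦcont
  -- N → ∞
  have hN : Tendsto (fun k : ℕ => 2 * (k : ℝ) + 1) atTop atTop := by
    apply Filter.tendsto_atTop_add_const_right
    exact (tendsto_natCast_atTop_atTop).const_mul_atTop (by norm_num)
  have ht : Tendsto (fun k : ℕ => (2 * (k : ℝ) + 1)⁻¹) atTop (𝓝 0) :=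
    tendsto_inv_atTop_zero.comp hN
  have hNA : Tendsto (fun k : ℕ => (2 * (k : ℝ) + 1) * A) atTop atTop :=
    hN.atTop_mul_const hApos
  -- eventual equality
  have hev : ∀ᶠ k : ℕ in atTop,
      Φ ((2 * (k : ℝ) + 1)⁻¹) =
      (fun k : ℕ =>
        let N : ℝ := 2 * k + 1
        let F : ℝ := N * (N * astar⁻¹ - c)⁻¹
        let G : ℝ := N * (N * astar⁻¹ - 2 * c)⁻¹
        (N - 1) / 2 * (N * G - 2 * (N * F) + N * astar)) k := by
    filter_upwards [hNA.eventually_gt_atTop (2 * |c|)] with k hk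
    set N : ℝ := 2 * (k : ℝ) + 1 with hNdef
    have hNpos : 0 < N := by positivity
    have h2c : N * A - 2 * c > 0 := by
      have : 2 * c ≤ 2 * |c| := by nlinarith [le_abs_self c]
      linarith
    have h1c : N * A - c > 0 := by
      have : c ≤ 2 * |c| := by nlinarith [le_abs_self c, abs_nonneg c]
      linarith
    have hastarA : astar = A⁻¹ := by rw [hA, inv_inv]
    have e1 : A - 2 * c * N⁻¹ = (N * A - 2 * c) / N := by field_simp
    have e2 : A - c * N⁻¹ = (N * A - c) / N := by field_simp
    show (1 - N⁻¹) * c ^ 2 / (A * (A - 2 * c * N⁻¹) * (A - c * N⁻¹)) =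
      (N - 1) / 2 * (N * (N * (N * astar⁻¹ - 2 * c)⁻¹) -
        2 * (N * (N * (N * astar⁻¹ - c)⁻¹)) + N * astar)
    rw [e1, e2, hastarA, inv_inv]
    field_simp [h2c.ne', h1c.ne', hNpos.ne', ne_of_gt (by linarith : N * A - c * 2 > 0)]
    ring
  exact Tendsto.congr' hev (hΦtend.comp ht)
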